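/- arXiv:2401.03556 — 2 statements merged into one kernel-verified Lean document; each statement's English description precedes it below -/
import Mathlib

section
/- Let κ ∈ [0,1], let T ≥ 1, and let S^G, S^L : {1,…,T} → ℝ with Φ defined by Φ(1) = 0 and Φ(t) = Φ(t−1) + κ·((S^G(t) − S^G(t−1)) + (S^L(t) − S^L(t−1))) for 2 ≤ t ≤ T. Define the market participants' benefit B := Σ_{t=2}^{T} (S^G(t) + S^L(t) − S^G(1) − S^L(1)) − Σ_{t=1}^{T} Φ(t). Then B = (1−κ) · Σ_{t=2}^{T} (S^G(t) + S^L(t) − S^G(1) − S^L(1)); moreover, if S^G(t) + S^L(t) ≥ S^G(1) + S^L(1) for every t, then both Σ_{t=1}^{T} Φ(t) ≥ 0 and B ≥ 0, and the incentive fee and market participants' benefit sum exactly to the Change in Surplus due to investment. -/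
/-- With `κ ∈ [0,1]` and the incentive fee `Φ` defined recursively
(`Φ 1 = 0`, `Φ t = Φ (t-1) + κ·(ΔS^G + ΔS^L)` for `2 ≤ t ≤ T`),
the market participants' benefit
`B = Σ_{t=2}^T (S^G t + S^L t − S^G 1 − S^L 1) − Σ_{t=1}^T Φ t`
equals `(1−κ)` times the Change in Surplus due to investment; moreover, if
`S^G t + S^L t ≥ S^G 1 + S^L 1` for every `t`, then the total incentive fee
and `B` are both nonnegative, and they sum exactly to the Change in Surplus
due to investment. -/
theorem market_participants_benefit
    (κ : ℝ) (hκ0 : 0 ≤ κ) (hκ1 : κ ≤ 1) (T : ℕ) (hT : 1 ≤ T)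
    (SG SL Φ : ℕ → ℝ)
    (hΦ1 : Φ 1 = 0)
    (hΦ : ∀ t : ℕ, 2 ≤ t → t ≤ T →
      Φ t = Φ (t - 1) + κ * ((SG t - SG (t - 1)) + (SL t - SL (t - 1))))
    (B : ℝ)
    (hB : B = ∑ t ∈ Finset.Icc 2 T, (SG t + SL t - SG 1 - SL 1)
            - ∑ t ∈ Finset.Icc 1 T, Φ t) :
    B = (1 - κ) * ∑ t ∈ Finset.Icc 2 T, (SG t + SL t - SG 1 - SL 1) ∧
    ((∀ t : ℕ, SG t + SL t ≥ SG 1 + SL 1) →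
      (0 ≤ ∑ t ∈ Finset.Icc 1 T, Φ t) ∧ (0 ≤ B) ∧
      (∑ t ∈ Finset.Icc 1 T, Φ t) + B =
        ∑ t ∈ Finset.Icc 2 T, (SG t + SL t - SG 1 - SL 1)) := by
  have key : ∀ t : ℕ, 1 ≤ t → t ≤ T → Φ t = κ * (SG t + SL t - SG 1 - SL 1) := by
    intro t ht
    induction t, ht using Nat.le_induction with
    | base => intro _; simp [hΦ1]
    | succ n hn ih =>
      intro hle
      have h2 : 2 ≤ n + 1 := by omega
      have := hΦ (n + 1) h2 hle
      simp only [Nat.add_sub_cancel] at this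
      rw [this, ih (by omega)]
      ring
  have hsum : ∑ t ∈ Finset.Icc 1 T, Φ t
      = κ * ∑ t ∈ Finset.Icc 2 T, (SG t + SL t - SG 1 - SL 1) := by
    have hins : Finset.Icc 1 T = insert 1 (Finset.Icc 2 T) := by
      ext x; simp [Finset.mem_Icc]; omega
    rw [hins, Finset.sum_insert (by simp), hΦ1, zero_add, Finset.mul_sum]
    apply Finset.sum_congr rfl
    intro t ht
    rw [Finset.mem_Icc] at ht
    exact key t (by omega) ht.2
  constructor
  · rw [hB, hsum]; ring
  · intro hge
    have hS : 0 ≤ ∑ t ∈ Finset.Icc 2 T, (SG t + SL t - SG 1 - SL 1) :=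
      Finset.sum_nonneg fun t _ => by have := hge t; linarith
    refine ⟨by rw [hsum]; positivity, ?_, by rw [hB]; ring⟩
    rw [hB, hsum]
    nlinarith
end

section
/- Let T ≥ 1, let r > −1 be a discount rate, let D be a nonempty set of investment decisions, and let MS, C, S^G, S^L : D → {1,…,T} → ℝ be the merchandising surplus, investment cost, generator surplus, and load surplus induced by each decision. Assume the first-year surpluses are independent of the decision: S^G(u)(1) = S^G(v)(1) and S^L(u)(1) = S^L(v)(1) for all u, v ∈ D. For κ = 1, define Φ(u)(t) := S^G(u)(t) + S^L(u)(t) − S^G(u)(1) − S^L(u)(1), the Transco profit TP(u) := Σ_{t=1}^{T} (1+r)^{−(t−1)} (MS(u)(t) + Φ(u)(t) − C(u)(t)), and social welfare SW(u) := Σ_{t=1}^{T} (1+r)^{−(t−1)} (MS(u)(t) + S^L(u)(t) + S^G(u)(t) − C(u)(t)). Then TP(u) − SW(u) is the same constant for all u ∈ D, and consequently u* ∈ D maximizes TP over D if and only if u* maximizes SW over D. -/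
/-- Under the original H-R-G-V mechanism (κ = 1), where the incentive fee is
`Φ u t = S^G u t + S^L u t − S^G u 1 − S^L u 1`, the Transco profit
`TP u = Σ_{t=1}^T (1+r)^{−(t−1)} (MS u t + Φ u t − C u t)` and social welfare
`SW u = Σ_{t=1}^T (1+r)^{−(t−1)} (MS u t + S^L u t + S^G u t − C u t)`
differ by a constant independent of the investment decision `u` (provided the
first-year surpluses are decision-independent); consequently a decision
maximizes the Transco's profit iff it maximizes social welfare. -/
theorem hrgv_profit_max_iff_welfare_max
    (T : ℕ) (hT : 1 ≤ T) (r : ℝ) (hr : -1 < r)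
    (D : Type*) (hD : Nonempty D)
    (MS C SG SL : D → ℕ → ℝ)
    (hfirst : ∀ u v : D, SG u 1 = SG v 1 ∧ SL u 1 = SL v 1)
    (Φ : D → ℕ → ℝ)
    (hΦ : ∀ u t, Φ u t = SG u t + SL u t - SG u 1 - SL u 1)
    (TP SW : D → ℝ)
    (hTP : ∀ u, TP u = ∑ t ∈ Finset.Icc 1 T,
      ((1 + r) ^ (t - 1))⁻¹ * (MS u t + Φ u t - C u t))
    (hSW : ∀ u, SW u = ∑ t ∈ Finset.Icc 1 T,
      ((1 + r) ^ (t - 1))⁻¹ * (MS u t + SL u t + SG u t - C u t)) :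
    (∃ c : ℝ, ∀ u : D, TP u - SW u = c) ∧
    (∀ ustar : D, (∀ u : D, TP u ≤ TP ustar) ↔ (∀ u : D, SW u ≤ SW ustar)) := by
  obtain ⟨u0⟩ := hD
  set c : ℝ := -(SG u0 1 + SL u0 1) * ∑ t ∈ Finset.Icc 1 T, ((1 + r) ^ (t - 1))⁻¹ with hc
  have key : ∀ u : D, TP u - SW u = c := by
    intro u
    rw [hTP, hSW, ← Finset.sum_sub_distrib, hc, Finset.mul_sum]
    refine Finset.sum_congr rfl fun t _ => ?_
    rw [hΦ, (hfirst u u0).1, (hfirst u u0).2]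
    ring
  refine ⟨⟨c, key⟩, fun ustar => ?_⟩
  constructor <;> intro h u
  · have := h u
    have h1 := key u; have h2 := key ustar
    linarith
  · have := h u
    have h1 := key u; have h2 := key ustar
    linarith
end
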